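/- Let d, m ≥ 1, X, R ∈ ℝ^{d×m}, δ > 0, and set Z := RᵀR + δXᵀX ∈ ℝ^{m×m} (a symmetric positive semidefinite matrix), with Z^{1/2} its positive semidefinite square root. Then for every t > 0 the matrix Z² + tI is invertible and the spectral norm of N₁(t) := X Z^{1/2}(Z² + tI)⁻¹ Z^{1/2} Rᵀ ∈ ℝ^{d×d} satisfies ‖N₁(t)‖₂² ≤ δ⁻¹. -/

import Mathlib

open Matrix
open scoped Matrix.Norms.L2Operator

/-- The spectral (ℓ₂ operator) norm of a real matrix. -/
noncomputable def specNorm {a b : ℕ} (M : Matrix (Fin a) (Fin b) ℝ) : ℝ :=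
  ‖LinearMap.toContinuousLinearMap (Matrix.toEuclideanLin M)‖

/-- The positive semidefinite square root of a positive semidefinite matrix, as defined in the
older Mathlib (`Matrix.PosSemidef.sqrt`, since removed). -/
noncomputable def Matrix.PosSemidef.sqrt {n : Type*} [Fintype n] [DecidableEq n]
    {A : Matrix n n ℝ} (hA : A.PosSemidef) : Matrix n n ℝ :=
  hA.1.eigenvectorUnitary.1 * diagonal (fun i => Real.sqrt (hA.1.eigenvalues i)) *
    (star hA.1.eigenvectorUnitary : Matrix n n ℝ)

lemma Matrix.PosSemidef.posSemidef_sqrt {n : Type*} [Fintype n] [DecidableEq n]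
    {A : Matrix n n ℝ} (hA : A.PosSemidef) : hA.sqrt.PosSemidef := by
  unfold Matrix.PosSemidef.sqrt
  have h := (PosSemidef.diagonal (n := n) (R := ℝ)
    (d := fun i => Real.sqrt (hA.1.eigenvalues i)) (fun i => Real.sqrt_nonneg _)).mul_mul_conjTranspose_same
    (hA.1.eigenvectorUnitary.1)
  simpa [Unitary.coe_star, Matrix.star_eq_conjTranspose] using h

lemma Matrix.PosSemidef.sqrt_mul_self {n : Type*} [Fintype n] [DecidableEq n]
    {A : Matrix n n ℝ} (hA : A.PosSemidef) : hA.sqrt * hA.sqrt = A := by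
  unfold Matrix.PosSemidef.sqrt
  have hU : (star hA.1.eigenvectorUnitary : Matrix n n ℝ) * hA.1.eigenvectorUnitary.1 = 1 :=
    Unitary.coe_star_mul_self _
  have hD : diagonal (fun i => Real.sqrt (hA.1.eigenvalues i)) *
      diagonal (fun i => Real.sqrt (hA.1.eigenvalues i)) = diagonal hA.1.eigenvalues := by
    rw [diagonal_mul_diagonal]
    congr 1; funext i
    exact Real.mul_self_sqrt (hA.eigenvalues_nonneg i)
  calc _ = hA.1.eigenvectorUnitary.1 * (diagonal (fun i => Real.sqrt (hA.1.eigenvalues i)) *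
        ((star hA.1.eigenvectorUnitary : Matrix n n ℝ) * hA.1.eigenvectorUnitary.1) *
        diagonal (fun i => Real.sqrt (hA.1.eigenvalues i))) *
        (star hA.1.eigenvectorUnitary : Matrix n n ℝ) := by simp only [Matrix.mul_assoc]
    _ = hA.1.eigenvectorUnitary.1 * diagonal hA.1.eigenvalues *
        (star hA.1.eigenvectorUnitary : Matrix n n ℝ) := by rw [hU, Matrix.mul_one, hD]
    _ = A := by
      conv_rhs => rw [hA.1.spectral_theorem]
      simp [Unitary.conjStarAlgAut_apply]

lemma psd_smul {n : ℕ} {M : Matrix (Fin n) (Fin n) ℝ} (h : M.PosSemidef) {c : ℝ} (hc : 0 ≤ c) :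
    (c • M).PosSemidef := by
  refine .of_dotProduct_mulVec_nonneg ?_ fun x => ?_
  · show (c • M)ᴴ = c • M
    rw [conjTranspose_smul, h.1.eq, star_trivial]
  · rw [smul_mulVec, dotProduct_smul, smul_eq_mul]
    exact mul_nonneg hc (h.dotProduct_mulVec_nonneg x)

lemma l2norm_psd_le {n : ℕ} {P : Matrix (Fin n) (Fin n) ℝ} (hP : P.PosSemidef) {c : ℝ}
    (hc : 0 ≤ c) (h : (c • (1 : Matrix (Fin n) (Fin n) ℝ) - P).PosSemidef) : ‖P‖ ≤ c := by
  -- first: (c*c) • 1 - P * P is PSD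
  obtain ⟨s, hsherm, hss⟩ : ∃ s : Matrix (Fin n) (Fin n) ℝ, sᴴ = s ∧ s * s = P :=
    ⟨hP.sqrt, hP.posSemidef_sqrt.1.eq, hP.sqrt_mul_self⟩
  have h1 := h.mul_mul_conjTranspose_same s
  rw [hsherm] at h1
  have e1 : s * (c • (1 : Matrix (Fin n) (Fin n) ℝ) - P) * s = c • P - P * P := by
    rw [← hss]
    simp [mul_sub, sub_mul, mul_smul_comm, smul_mul_assoc, mul_assoc]
  rw [e1] at h1
  have hsq : ((c * c) • (1 : Matrix (Fin n) (Fin n) ℝ) - P * P).PosSemidef := by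
    have h2 := (psd_smul h hc).add h1
    have e2 : c • (c • (1 : Matrix (Fin n) (Fin n) ℝ) - P) + (c • P - P * P)
        = (c * c) • (1 : Matrix (Fin n) (Fin n) ℝ) - P * P := by
      rw [smul_sub, smul_smul]; abel
    rwa [e2] at h2
  rw [Matrix.l2_opNorm_def]
  refine ContinuousLinearMap.opNorm_le_bound _ hc fun x => ?_
  have key : ∀ w : Fin n → ℝ, (P *ᵥ w) ⬝ᵥ (P *ᵥ w) ≤ (c * c) * (w ⬝ᵥ w) := by
    intro w
    have h3 := hsq.dotProduct_mulVec_nonneg w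
    have hPt : Pᵀ = P := by
      rw [← Matrix.conjTranspose_eq_transpose_of_trivial, hP.1.eq]
    have e3 : (P *ᵥ w) ⬝ᵥ (P *ᵥ w) = w ⬝ᵥ ((P * P) *ᵥ w) := by
      rw [← mulVec_mulVec, dotProduct_mulVec w, ← hPt, vecMul_transpose, hPt]
    rw [e3]
    simp only [star_trivial, sub_mulVec, dotProduct_sub, smul_mulVec, one_mulVec,
      dotProduct_smul, smul_eq_mul] at h3
    linarith
  -- now the norm bound
  have hx2 : ‖(LinearEquiv.trans toEuclideanLin LinearMap.toContinuousLinearMap) P x‖ ^ 2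
      ≤ (c * ‖x‖) ^ 2 := by
    have hTx : ‖(LinearEquiv.trans toEuclideanLin LinearMap.toContinuousLinearMap) P x‖ ^ 2
        = (P *ᵥ (WithLp.equiv 2 (Fin n → ℝ) x)) ⬝ᵥ (P *ᵥ (WithLp.equiv 2 (Fin n → ℝ) x)) := by
      rw [← real_inner_self_eq_norm_sq, PiLp.inner_apply]
      simp [toEuclideanLin_apply, dotProduct, sq]
    have hxx : ‖x‖ ^ 2 = (WithLp.equiv 2 (Fin n → ℝ) x) ⬝ᵥ (WithLp.equiv 2 (Fin n → ℝ) x) := by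
      rw [← real_inner_self_eq_norm_sq, PiLp.inner_apply]
      simp [dotProduct, sq]
    calc ‖(LinearEquiv.trans toEuclideanLin LinearMap.toContinuousLinearMap) P x‖ ^ 2
        = (P *ᵥ (WithLp.equiv 2 (Fin n → ℝ) x)) ⬝ᵥ (P *ᵥ (WithLp.equiv 2 (Fin n → ℝ) x)) := hTx
      _ ≤ (c * c) * ((WithLp.equiv 2 (Fin n → ℝ) x) ⬝ᵥ (WithLp.equiv 2 (Fin n → ℝ) x)) := key _
      _ = (c * ‖x‖) ^ 2 := by rw [← hxx]; ring
  calc ‖(LinearEquiv.trans toEuclideanLin LinearMap.toContinuousLinearMap) P x‖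
      = Real.sqrt (‖(LinearEquiv.trans toEuclideanLin LinearMap.toContinuousLinearMap) P x‖ ^ 2) :=
        (Real.sqrt_sq (norm_nonneg _)).symm
    _ ≤ Real.sqrt ((c * ‖x‖) ^ 2) := Real.sqrt_le_sqrt hx2
    _ = c * ‖x‖ := Real.sqrt_sq (mul_nonneg hc (norm_nonneg x))


/-- Intermediate claim in the proof of Lemma 2: with `Z = RᵀR + δXᵀX` (δ > 0) and `Z^{1/2}`
its positive semidefinite square root, for every `t > 0` the matrix `Z² + tI` is invertible and
`‖X Z^{1/2}(Z² + tI)⁻¹ Z^{1/2} Rᵀ‖₂² ≤ δ⁻¹`. -/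
theorem sam_N1_specnorm_bound (d m : ℕ) (hd : 1 ≤ d) (hm : 1 ≤ m)
    (X R : Matrix (Fin d) (Fin m) ℝ) (δ : ℝ) (hδ : 0 < δ)
    (Z : Matrix (Fin m) (Fin m) ℝ) (hZdef : Z = Rᵀ * R + δ • (Xᵀ * X))
    (hZ : Z.PosSemidef) :
    ∀ t : ℝ, 0 < t →
      IsUnit (Z ^ 2 + t • (1 : Matrix (Fin m) (Fin m) ℝ)) ∧
      specNorm (X * hZ.sqrt * (Z ^ 2 + t • (1 : Matrix (Fin m) (Fin m) ℝ))⁻¹ * hZ.sqrt * Rᵀ) ^ 2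
        ≤ δ⁻¹ := by
  intro t ht
  have htI : (t • (1 : Matrix (Fin m) (Fin m) ℝ)).PosDef := by
    rw [smul_one_eq_diagonal]
    exact posDef_diagonal_iff.mpr fun _ => ht
  set B := Z ^ 2 + t • (1 : Matrix (Fin m) (Fin m) ℝ) with hBdef
  have hB : B.PosDef := Matrix.PosDef.posSemidef_add (hZ.pow 2) htI
  refine ⟨hB.isUnit, ?_⟩
  have hdet : IsUnit B.det := (Matrix.isUnit_iff_isUnit_det B).mp hB.isUnit
  have hBA : B * B⁻¹ = 1 := Matrix.mul_nonsing_inv B hdet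
  have hAB : B⁻¹ * B = 1 := Matrix.nonsing_inv_mul B hdet
  have hApsd : (B⁻¹).PosSemidef := hB.inv.posSemidef
  set S := hZ.sqrt with hSdef
  set W := hApsd.sqrt with hWdef
  have hWpsd : W.PosSemidef := hApsd.posSemidef_sqrt
  have hW : Wᴴ = W := hWpsd.1.eq
  have hWW : W * W = B⁻¹ := hApsd.sqrt_mul_self
  have hS : Sᴴ = S := hZ.posSemidef_sqrt.1.eq
  have hSS : S * S = Z := hZ.sqrt_mul_self
  have hXh : Xᴴ = Xᵀ := Matrix.conjTranspose_eq_transpose_of_trivial X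
  have hSt : Sᵀ = S := by rw [← Matrix.conjTranspose_eq_transpose_of_trivial, hS]
  have hWt : Wᵀ = W := by rw [← Matrix.conjTranspose_eq_transpose_of_trivial, hW]
  have hRh : Rᴴ = Rᵀ := Matrix.conjTranspose_eq_transpose_of_trivial R
  have hXX : (Xᵀ * X).PosSemidef := by rw [← hXh]; exact posSemidef_conjTranspose_mul_self X
  have hRR : (Rᵀ * R).PosSemidef := by rw [← hRh]; exact posSemidef_conjTranspose_mul_self R
  have hδ' : (0:ℝ) ≤ δ⁻¹ := inv_nonneg.mpr hδ.le
  -- commutation facts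
  have hSZ : S * Z = Z * S := by rw [← hSS, mul_assoc]
  have hWA : W * B⁻¹ = B⁻¹ * W := by rw [← hWW, mul_assoc]
  have hWB : W * B = B * W := by
    calc W * B = (B * B⁻¹) * (W * B) := by rw [hBA, one_mul]
      _ = B * (B⁻¹ * W * B) := by simp [mul_assoc]
      _ = B * (W * B⁻¹ * B) := by rw [hWA]
      _ = B * W := by rw [mul_assoc, hAB, mul_one]
  have hWBW : W * B * W = 1 := by rw [hWB, mul_assoc, hWW, hBA]
  -- the sandwiching matrix G
  set G := W * S with hGdef
  have hGH : Gᴴ = S * W := by rw [hGdef, conjTranspose_mul, hS, hW]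
  have hJeq : G * Z * Gᴴ = W * (Z * Z) * W := by
    rw [hGH, hGdef]
    have hSZS : S * Z * S = Z * Z := by rw [hSZ, mul_assoc, hSS]
    calc W * S * Z * (S * W) = W * (S * Z * S) * W := by simp [mul_assoc]
      _ = W * (Z * Z) * W := by rw [hSZS]
  have hJle : ((1 : Matrix (Fin m) (Fin m) ℝ) - G * Z * Gᴴ).PosSemidef := by
    have e : (1 : Matrix (Fin m) (Fin m) ℝ) - G * Z * Gᴴ = t • (W * W) := by
      rw [hJeq, ← hWBW, hBdef]
      simp only [pow_two, mul_add, add_mul, mul_smul_comm, smul_mul_assoc, mul_one, mul_assoc]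
      abel
    rw [e]
    exact psd_smul (by rw [hWW]; exact hApsd) ht.le
  -- the two key PSD bounds
  have M1 : δ⁻¹ • Z - Xᵀ * X = δ⁻¹ • (Rᵀ * R) := by
    rw [hZdef, smul_add, smul_smul, inv_mul_cancel₀ hδ.ne', one_smul, add_sub_cancel_right]
  have M2 : Z - Rᵀ * R = δ • (Xᵀ * X) := by rw [hZdef, add_sub_cancel_left]
  set C₁ := X * S * W with hC₁def
  set C₃ := R * S * W with hC₃def
  have hP : C₁ᴴ * C₁ = G * (Xᵀ * X) * Gᴴ := by
    rw [hGH, hGdef, hC₁def]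
    simp [conjTranspose_mul, hS, hW, hSt, hWt, hXh, Matrix.mul_assoc]
  have hQ : C₃ᴴ * C₃ = G * (Rᵀ * R) * Gᴴ := by
    rw [hGH, hGdef, hC₃def]
    simp [conjTranspose_mul, hS, hW, hSt, hWt, hRh, Matrix.mul_assoc]
  have hbound1 : (δ⁻¹ • (1 : Matrix (Fin m) (Fin m) ℝ) - C₁ᴴ * C₁).PosSemidef := by
    have hconj := (psd_smul hRR hδ').mul_mul_conjTranspose_same G
    have e : δ⁻¹ • (1 : Matrix (Fin m) (Fin m) ℝ) - C₁ᴴ * C₁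
        = δ⁻¹ • ((1 : Matrix (Fin m) (Fin m) ℝ) - G * Z * Gᴴ) + G * (δ⁻¹ • (Rᵀ * R)) * Gᴴ := by
      rw [hP, ← M1]
      simp only [smul_sub, mul_sub, sub_mul, mul_smul_comm, smul_mul_assoc]
      abel
    rw [e]
    exact (psd_smul hJle hδ').add hconj
  have hbound2 : ((1 : Matrix (Fin m) (Fin m) ℝ) - C₃ᴴ * C₃).PosSemidef := by
    have hconj := (psd_smul hXX hδ.le).mul_mul_conjTranspose_same G
    have e : (1 : Matrix (Fin m) (Fin m) ℝ) - C₃ᴴ * C₃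
        = ((1 : Matrix (Fin m) (Fin m) ℝ) - G * Z * Gᴴ) + G * (δ • (Xᵀ * X)) * Gᴴ := by
      rw [hQ, ← M2]
      simp only [mul_sub, sub_mul]
      abel
    rw [e]
    exact hJle.add hconj
  -- norms
  have hnorm1 : ‖C₁‖ * ‖C₁‖ ≤ δ⁻¹ := by
    rw [← Matrix.l2_opNorm_conjTranspose_mul_self C₁]
    exact l2norm_psd_le (posSemidef_conjTranspose_mul_self C₁) hδ' hbound1
  have hnorm2 : ‖C₃‖ * ‖C₃‖ ≤ 1 := by
    rw [← Matrix.l2_opNorm_conjTranspose_mul_self C₃]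
    have := l2norm_psd_le (posSemidef_conjTranspose_mul_self C₃) zero_le_one
      (by rw [one_smul] at *; exact hbound2)
    simpa using this
  set C₂ := W * S * Rᵀ with hC₂def
  have hC2 : C₂ = C₃ᴴ := by
    rw [hC₂def, hC₃def]
    simp [conjTranspose_mul, hS, hW, hSt, hWt, hRh, Matrix.mul_assoc]
  have hfact : X * S * B⁻¹ * S * Rᵀ = C₁ * C₂ := by
    rw [hC₁def, hC₂def, ← hWW]
    simp [Matrix.mul_assoc]
  have hmul : ‖X * S * B⁻¹ * S * Rᵀ‖ ≤ ‖C₁‖ * ‖C₃‖ := by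
    rw [hfact]
    calc ‖C₁ * C₂‖ ≤ ‖C₁‖ * ‖C₂‖ := Matrix.l2_opNorm_mul _ _
      _ = ‖C₁‖ * ‖C₃‖ := by rw [hC2, Matrix.l2_opNorm_conjTranspose]
  have hspec : specNorm (X * S * B⁻¹ * S * Rᵀ) = ‖X * S * B⁻¹ * S * Rᵀ‖ := rfl
  rw [hspec]
  calc ‖X * S * B⁻¹ * S * Rᵀ‖ ^ 2 ≤ (‖C₁‖ * ‖C₃‖) ^ 2 :=
        pow_le_pow_left₀ (norm_nonneg _) hmul 2
    _ = (‖C₁‖ * ‖C₁‖) * (‖C₃‖ * ‖C₃‖) := by ring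
    _ ≤ δ⁻¹ * 1 := mul_le_mul hnorm1 hnorm2 (mul_self_nonneg _) hδ'
    _ = δ⁻¹ := mul_one _
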